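/- Let f ∈ ℓ^∞_m(ℤ²) with m > 2 and Σ_{x∈ℤ²} f(x) = 0. Then there exists a universal constant c₀ > 1 such that for all x ∈ ℤ², |(Φ₀ ∗ f)(x)| ≤ (c₀^m/(m−2)⁴) ‖f‖_{ℓ^∞_m} (e+|x|)^{(2−m)/(m+1)} (ln(e+|x|))^{1/(m+1)}. -/

import Mathlib

set_option maxHeartbeats 1000000


noncomputable def latticeNorm (x : ℤ × ℤ) : ℝ :=
  Real.sqrt ((x.1 : ℝ) ^ 2 + (x.2 : ℝ) ^ 2)

def latticeLap (u : ℤ × ℤ → ℝ) (x : ℤ × ℤ) : ℝ :=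
  (u (x.1 + 1, x.2) - u x) + (u (x.1 - 1, x.2) - u x) +
    (u (x.1, x.2 + 1) - u x) + (u (x.1, x.2 - 1) - u x)

noncomputable def gamma₀ : ℝ :=
  (1 / Real.pi) * (Real.eulerMascheroniConstant + Real.log 2 / 2)

namespace GCE

noncomputable def toE (x : ℤ × ℤ) : EuclideanSpace ℝ (Fin 2) := WithLp.toLp 2 ![(x.1 : ℝ), (x.2 : ℝ)]

lemma latticeNorm_eq (x : ℤ × ℤ) : latticeNorm x = ‖toE x‖ := by
  rw [EuclideanSpace.norm_eq]
  simp [latticeNorm, toE, Fin.sum_univ_two, Real.norm_eq_abs, sq_abs]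

lemma toE_add (a b : ℤ × ℤ) : toE (a + b) = toE a + toE b := by
  ext i
  fin_cases i <;> simp [toE] <;> push_cast <;> ring

lemma toE_neg (a : ℤ × ℤ) : toE (-a) = -toE a := by
  ext i
  fin_cases i <;> simp [toE]

lemma latticeNorm_nonneg (x : ℤ × ℤ) : 0 ≤ latticeNorm x := Real.sqrt_nonneg _

lemma latticeNorm_neg (x : ℤ × ℤ) : latticeNorm (-x) = latticeNorm x := by
  rw [latticeNorm_eq, latticeNorm_eq, toE_neg, norm_neg]

lemma latticeNorm_add_le (a b : ℤ × ℤ) :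
    latticeNorm (a + b) ≤ latticeNorm a + latticeNorm b := by
  rw [latticeNorm_eq, latticeNorm_eq, latticeNorm_eq, toE_add]
  exact norm_add_le _ _

lemma one_le_latticeNorm {x : ℤ × ℤ} (hx : x ≠ 0) : 1 ≤ latticeNorm x := by
  have h1 : (1 : ℝ) ≤ (x.1 : ℝ) ^ 2 + (x.2 : ℝ) ^ 2 := by
    have hne : ¬(x.1 = 0 ∧ x.2 = 0) := by
      intro h; exact hx (Prod.ext h.1 h.2)
    have : (1 : ℤ) ≤ x.1 ^ 2 + x.2 ^ 2 := by
      rcases not_and_or.mp hne with h | h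
      · nlinarith [sq_nonneg x.2, Int.one_le_abs (by simpa using h : x.1 ≠ 0), sq_abs x.1,
          sq_nonneg (|x.1| - 1)]
      · nlinarith [sq_nonneg x.1, Int.one_le_abs (by simpa using h : x.2 ≠ 0), sq_abs x.2,
          sq_nonneg (|x.2| - 1)]
    exact_mod_cast this
  calc (1:ℝ) = Real.sqrt 1 := (Real.sqrt_one).symm
  _ ≤ latticeNorm x := Real.sqrt_le_sqrt h1

end GCE

namespace GCE2
open Real

lemma rpow_neg_anti {a b q : ℝ} (ha : 0 < a) (hab : a ≤ b) (hq : 0 ≤ q) :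
    b ^ (-q) ≤ a ^ (-q) := by
  rw [Real.rpow_neg (le_trans ha.le hab), Real.rpow_neg ha.le]
  have h1 : 0 < a ^ q := Real.rpow_pos_of_pos ha q
  have h2 : a ^ q ≤ b ^ q := Real.rpow_le_rpow ha.le hab hq
  exact inv_anti₀ h1 h2

lemma log_le_rpow_div {t δ : ℝ} (ht : 0 < t) (hδ : 0 < δ) :
    Real.log t ≤ t ^ δ / δ := by
  have h1 : Real.log (t ^ δ) = δ * Real.log t := Real.log_rpow ht δ
  have h2 : Real.log (t ^ δ) ≤ t ^ δ - 1 :=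
    Real.log_le_sub_one_of_pos (Real.rpow_pos_of_pos ht δ)
  have h3 : δ * Real.log t ≤ t ^ δ := by nlinarith [Real.rpow_pos_of_pos ht δ]
  rw [le_div_iff₀ hδ]
  nlinarith
 
lemma log_e_add_le {δ u : ℝ} (hδ : 0 < δ) (hu : 0 ≤ u) :
    Real.log (Real.exp 1 + u) ≤ (1 + 1 / δ) * (1 + u) ^ δ := by
  have he : (1:ℝ) ≤ Real.exp 1 := by
    have := Real.add_one_le_exp (1:ℝ); linarith
  have h1 : Real.exp 1 + u ≤ Real.exp 1 * (1 + u) := by nlinarith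
  have h2 : Real.log (Real.exp 1 + u) ≤ Real.log (Real.exp 1 * (1 + u)) :=
    Real.log_le_log (by positivity) h1
  rw [Real.log_mul (by positivity) (by positivity), Real.log_exp] at h2
  have h3 : Real.log (1 + u) ≤ (1 + u) ^ δ / δ := log_le_rpow_div (by linarith) hδ
  have h4 : (1:ℝ) ≤ (1 + u) ^ δ := Real.one_le_rpow (by linarith) hδ.le
  have h5 : (1 + u) ^ δ / δ = (1/δ) * (1+u)^δ := by ring
  nlinarith

lemma nat_sum_bound {t : ℝ} (ht : 1 < t) :
    Summable (fun n : ℕ => (1 + (n : ℝ)) ^ (-t)) ∧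
    ∑' n : ℕ, (1 + (n : ℝ)) ^ (-t) ≤ 1 + 1 / (t - 1) := by
  set σ := t - 1 with hσdef
  have hσ : 0 < σ := by simp [hσdef]; linarith
  set v : ℕ → ℝ := fun n => ((n : ℝ) + 1) ^ (-σ) / σ with hv
  have step : ∀ n : ℕ, (1 + ((n:ℝ) + 1)) ^ (-t) ≤ v n - v (n + 1) := by
    intro n
    set a : ℝ := (n : ℝ) + 1 with had
    set b : ℝ := (n : ℝ) + 2 with hbd
    have ha : (0:ℝ) < a := by positivity
    have hb : (0:ℝ) < b := by simp [hbd]; positivity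
    have hab : a < b := by simp [had, hbd]
    set u : ℝ := a / b with hud
    have hu0 : 0 < u := by positivity
    have hu1 : u < 1 := by rw [hud, div_lt_one hb]; exact hab
    -- u ^ (-σ) ≥ 1 + σ * (1 - u)
    have key : 1 + σ * (1 - u) ≤ u ^ (-σ) := by
      have hlog : Real.log u ≤ u - 1 := Real.log_le_sub_one_of_pos hu0
      have : u ^ (-σ) = Real.exp (Real.log u * (-σ)) := by
        rw [Real.rpow_def_of_pos hu0]
      rw [this]
      have := Real.add_one_le_exp (Real.log u * (-σ))
      nlinarith
    -- a ^ (-σ) ≥ b ^ (-σ) * (1 + σ / b)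
    have hbu : a = b * u := by rw [hud]; field_simp
    have expand : a ^ (-σ) = b ^ (-σ) * u ^ (-σ) := by
      rw [hbu, Real.mul_rpow hb.le hu0.le]
    have h1u : 1 - u = 1 / b := by
      rw [hud]; field_simp; simp [had, hbd]; ring
    have hbσ : 0 < b ^ (-σ) := Real.rpow_pos_of_pos hb σ |> fun h => by
      rw [Real.rpow_neg hb.le]; positivity
    have hmain : b ^ (-σ) + σ * b ^ (-σ) * (1/b) ≤ a ^ (-σ) := by
      rw [expand]
      have := mul_le_mul_of_nonneg_left key hbσ.le
      calc b ^ (-σ) + σ * b ^ (-σ) * (1/b) = b ^ (-σ) * (1 + σ * (1 - u)) := by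
            rw [h1u]; ring
        _ ≤ b ^ (-σ) * u ^ (-σ) := by nlinarith
    have hbt : b ^ (-σ) * (1/b) = b ^ (-t) := by
      rw [one_div, ← Real.rpow_neg_one b, ← Real.rpow_add hb]
      congr 1
      simp [hσdef]; ring
    have hgoal : b ^ (-t) ≤ (a ^ (-σ) - b ^ (-σ)) / σ := by
      rw [le_div_iff₀ hσ]
      rw [mul_assoc, hbt] at hmain
      linarith
    have hv1 : v n = a ^ (-σ) / σ := by simp [hv, had]
    have hv2 : v (n+1) = b ^ (-σ) / σ := by
      simp [hv, hbd]; ring_nf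
    have : (1 + ((n:ℝ)+1)) = b := by simp [hbd]; ring
    rw [this, hv1, hv2]
    calc b ^ (-t) ≤ (a ^ (-σ) - b ^ (-σ)) / σ := hgoal
      _ = a ^ (-σ)/σ - b ^ (-σ)/σ := by ring
  have hnonneg : ∀ n : ℕ, 0 ≤ (1 + (n:ℝ)) ^ (-t) := fun n => Real.rpow_nonneg (by positivity) _
  have hpart : ∀ N : ℕ, ∑ i ∈ Finset.range N, (1 + ((i:ℝ) + 1)) ^ (-t) ≤ 1 / σ := by
    intro N
    calc ∑ i ∈ Finset.range N, (1 + ((i:ℝ) + 1)) ^ (-t)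
        ≤ ∑ i ∈ Finset.range N, (v i - v (i+1)) := Finset.sum_le_sum (fun i _ => step i)
      _ = v 0 - v N := Finset.sum_range_sub' v N
      _ ≤ v 0 := by
          have : 0 ≤ v N := by
            apply div_nonneg _ hσ.le
            exact Real.rpow_nonneg (by positivity) _
          linarith
      _ = 1 / σ := by simp [hv]
  have hsump : Summable (fun n : ℕ => (1 + ((n:ℝ) + 1)) ^ (-t)) :=
    summable_of_sum_range_le (fun n => Real.rpow_nonneg (by positivity) _) hpart
  have hshift : (fun n : ℕ => (1 + ((n:ℝ) + 1)) ^ (-t)) =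
      (fun n : ℕ => (1 + ((n + 1 : ℕ) : ℝ)) ^ (-t)) := by
    funext n; push_cast; ring_nf
  have hsum : Summable (fun n : ℕ => (1 + (n:ℝ)) ^ (-t)) := by
    rw [← summable_nat_add_iff 1]
    rw [← hshift] at *
    exact hsump
  refine ⟨hsum, ?_⟩
  have h0 : ∑' n : ℕ, (1 + (n:ℝ)) ^ (-t) =
      (1 + ((0:ℕ):ℝ)) ^ (-t) + ∑' n : ℕ, (1 + ((n + 1 : ℕ):ℝ)) ^ (-t) :=
    hsum.tsum_eq_zero_add
  have h1 : ((1:ℝ) + ((0:ℕ):ℝ)) ^ (-t) = 1 := by norm_num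
  have h2 : ∑' n : ℕ, (1 + ((n + 1 : ℕ):ℝ)) ^ (-t) ≤ 1 / σ := by
    rw [← hshift]
    exact hsump.tsum_le_of_sum_range_le hpart
  rw [h0, h1]
  simp [hσdef] at h2 ⊢
  linarith

end GCE2

namespace GCE3
open Real GCE GCE2

lemma int_sum_bound {t : ℝ} (ht : 1 < t) :
    Summable (fun k : ℤ => (1 + |(k : ℝ)|) ^ (-t)) ∧
    ∑' k : ℤ, (1 + |(k : ℝ)|) ^ (-t) ≤ 1 + 2 / (t - 1) := by
  obtain ⟨hs, hb⟩ := nat_sum_bound ht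
  set F : ℤ → ℝ := fun k => (1 + |(k : ℝ)|) ^ (-t) with hF
  have ptpos : ∀ n : ℕ, (1 + ((n:ℝ))) ^ (-t) = F ((n:ℤ)) := by
    intro n; simp [hF]
  have ptneg : ∀ n : ℕ, (1 + ((n:ℝ))) ^ (-t) = F (-(n:ℤ)) := by
    intro n; simp [hF]
  have hspos : Summable (fun n : ℕ => F ((n:ℤ))) := hs.congr ptpos
  have hsneg : Summable (fun n : ℕ => F (-(n:ℤ))) := hs.congr ptneg
  have hsum : Summable F := Summable.of_nat_of_neg hspos hsneg
  refine ⟨hsum, ?_⟩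
  have heq := hspos.tsum_of_nat_of_neg hsneg
  have e1 : ∑' n : ℕ, F ((n:ℤ)) = ∑' n : ℕ, (1 + (n:ℝ)) ^ (-t) :=
    tsum_congr (fun n => (ptpos n).symm)
  have e2 : ∑' n : ℕ, F (-(n:ℤ)) = ∑' n : ℕ, (1 + (n:ℝ)) ^ (-t) :=
    tsum_congr (fun n => (ptneg n).symm)
  have e3 : F 0 = 1 := by simp [hF]
  rw [heq, e1, e2, e3]
  have h2 : 2 / (t-1) = 2 * (1/(t-1)) := by ring
  linarith

lemma one_add_latticeNorm_pos (y : ℤ × ℤ) : (0:ℝ) < 1 + latticeNorm y := by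
  linarith [latticeNorm_nonneg y]

lemma latticeNorm_coord_le (y : ℤ × ℤ) :
    |((y.1 : ℝ))| ≤ latticeNorm y ∧ |((y.2 : ℝ))| ≤ latticeNorm y := by
  constructor
  · rw [← Real.sqrt_sq_eq_abs]
    exact Real.sqrt_le_sqrt (by nlinarith [sq_nonneg ((y.2:ℝ))])
  · rw [← Real.sqrt_sq_eq_abs]
    exact Real.sqrt_le_sqrt (by nlinarith [sq_nonneg ((y.1:ℝ))])

lemma sum2d {s : ℝ} (hs : 2 < s) :
    Summable (fun y : ℤ × ℤ => (1 + latticeNorm y) ^ (-s)) ∧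
    ∑' y : ℤ × ℤ, (1 + latticeNorm y) ^ (-s) ≤ (1 + 4 / (s - 2)) ^ 2 := by
  have ht : (1:ℝ) < s / 2 := by linarith
  obtain ⟨h1s, h1b⟩ := int_sum_bound ht
  set h : ℤ → ℝ := fun k => (1 + |(k : ℝ)|) ^ (-(s/2)) with hh
  have hnn : ∀ k, 0 ≤ h k := fun k => Real.rpow_nonneg (by positivity) _
  have claim : ∀ y : ℤ × ℤ, (1 + latticeNorm y) ^ (-s) ≤ h y.1 * h y.2 := by
    intro y
    set L := latticeNorm y with hL
    have hL0 : 0 ≤ L := latticeNorm_nonneg y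
    obtain ⟨hc1, hc2⟩ := latticeNorm_coord_le y
    have hLsq : L ^ 2 = (y.1:ℝ)^2 + (y.2:ℝ)^2 := Real.sq_sqrt (by positivity)
    have hbase : (1 + |(y.1:ℝ)|) * (1 + |(y.2:ℝ)|) ≤ (1 + L)^2 := by
      nlinarith [sq_abs ((y.1:ℝ)), sq_abs ((y.2:ℝ)), sq_nonneg (|(y.1:ℝ)| - |(y.2:ℝ)|)]
    have e1 : (1 + L) ^ (-s) = ((1 + L)^2) ^ (-(s/2)) := by
      rw [← Real.rpow_natCast (1+L) 2, ← Real.rpow_mul (by linarith)]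
      congr 1; ring
    have e2 : h y.1 * h y.2 = ((1 + |(y.1:ℝ)|) * (1 + |(y.2:ℝ)|)) ^ (-(s/2)) := by
      simp only [hh]
      rw [Real.mul_rpow (by positivity : (0:ℝ) ≤ 1 + |(y.1:ℝ)|) (by positivity : (0:ℝ) ≤ 1 + |(y.2:ℝ)|)]
    rw [e1, e2]
    exact rpow_neg_anti (by positivity) hbase (by linarith)
  have hprodsum : Summable (fun z : ℤ × ℤ => h z.1 * h z.2) :=
    Summable.mul_of_nonneg h1s h1s hnn hnn
  have hsum : Summable (fun y : ℤ × ℤ => (1 + latticeNorm y) ^ (-s)) :=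
    Summable.of_nonneg_of_le (fun y => Real.rpow_nonneg (one_add_latticeNorm_pos y).le _)
      claim hprodsum
  refine ⟨hsum, ?_⟩
  have hnorm : Summable (fun k : ℤ => ‖h k‖) := by
    apply h1s.congr; intro k; rw [Real.norm_eq_abs, abs_of_nonneg (hnn k)]
  have hprodeq : ((∑' k : ℤ, h k) * ∑' k : ℤ, h k) = ∑' z : ℤ × ℤ, h z.1 * h z.2 :=
    tsum_mul_tsum_of_summable_norm hnorm hnorm
  have h0 : 0 ≤ ∑' k : ℤ, h k := tsum_nonneg hnn
  have hb2 : ∑' k : ℤ, h k ≤ 1 + 4 / (s - 2) := by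
    have : 2 / (s/2 - 1) = 4 / (s - 2) := by
      rw [div_eq_div_iff (by linarith) (by linarith)]; ring
    rw [← this]; exact h1b
  calc ∑' y : ℤ × ℤ, (1 + latticeNorm y) ^ (-s) ≤ ∑' z : ℤ × ℤ, h z.1 * h z.2 :=
        Summable.tsum_le_tsum claim hsum hprodsum
    _ = (∑' k : ℤ, h k) * (∑' k : ℤ, h k) := hprodeq.symm
    _ ≤ (1 + 4/(s-2)) * (1 + 4/(s-2)) := mul_le_mul hb2 hb2 h0 (by linarith [h0, hb2])
    _ = (1 + 4/(s-2))^2 := by ring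

lemma tsum_bound_two {F : ℤ × ℤ → ℝ} {K₁ K₂ s₁ s₂ : ℝ} (hs₁ : 2 < s₁) (hs₂ : 2 < s₂)
    (hK₁ : 0 ≤ K₁) (hK₂ : 0 ≤ K₂)
    (h : ∀ y, |F y| ≤ K₁ * (1 + latticeNorm y) ^ (-s₁) + K₂ * (1 + latticeNorm y) ^ (-s₂)) :
    Summable F ∧ |∑' y, F y| ≤ K₁ * (1 + 4/(s₁-2))^2 + K₂ * (1 + 4/(s₂-2))^2 := by
  obtain ⟨hW₁, hB₁⟩ := sum2d hs₁
  obtain ⟨hW₂, hB₂⟩ := sum2d hs₂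
  set W : ℤ × ℤ → ℝ := fun y => K₁ * (1 + latticeNorm y) ^ (-s₁) + K₂ * (1 + latticeNorm y) ^ (-s₂)
    with hWdef
  have hWsum : Summable W := (hW₁.mul_left K₁).add (hW₂.mul_left K₂)
  have hFabs : Summable (fun y => |F y|) :=
    Summable.of_nonneg_of_le (fun y => abs_nonneg _) h hWsum
  have hFsum : Summable F := hFabs.of_abs
  refine ⟨hFsum, ?_⟩
  have hFnorm : Summable (fun y => ‖F y‖) := by
    simpa [Real.norm_eq_abs] using hFabs
  have habs : ‖∑' y, F y‖ ≤ ∑' y, ‖F y‖ := norm_tsum_le_tsum_norm hFnorm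
  calc |∑' y, F y| ≤ ∑' y, |F y| := by
        simpa [Real.norm_eq_abs] using habs
    _ ≤ ∑' y, W y := Summable.tsum_le_tsum h hFabs hWsum
    _ = K₁ * (∑' y : ℤ × ℤ, (1 + latticeNorm y) ^ (-s₁))
        + K₂ * (∑' y : ℤ × ℤ, (1 + latticeNorm y) ^ (-s₂)) := by
        rw [hWdef, Summable.tsum_add (hW₁.mul_left K₁) (hW₂.mul_left K₂), tsum_mul_left, tsum_mul_left]
    _ ≤ K₁ * (1 + 4/(s₁-2))^2 + K₂ * (1 + 4/(s₂-2))^2 := by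
        have n1 : 0 ≤ ∑' y : ℤ × ℤ, (1 + latticeNorm y) ^ (-s₁) :=
          tsum_nonneg (fun y => Real.rpow_nonneg (one_add_latticeNorm_pos y).le _)
        have n2 : 0 ≤ ∑' y : ℤ × ℤ, (1 + latticeNorm y) ^ (-s₂) :=
          tsum_nonneg (fun y => Real.rpow_nonneg (one_add_latticeNorm_pos y).le _)
        gcongr

lemma absorb {D m : ℝ} (hD : 1 ≤ D) (hm : 2 < m) : D * m^4 ≤ (Real.exp 2 * D) ^ m := by
  have hm0 : (0:ℝ) < m := by linarith
  have h1 : m ≤ Real.exp (m/2) := by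
    have h2 := Real.add_one_le_exp (m/4)
    have h3 : Real.exp (m/4) * Real.exp (m/4) = Real.exp (m/2) := by
      rw [← Real.exp_add]; ring_nf
    nlinarith [Real.exp_pos (m/4), sq_nonneg (1 - m/4),
      mul_le_mul h2 h2 (by linarith) (Real.exp_pos (m/4)).le]
  have h4 : m^4 ≤ Real.exp (m/2) ^ 4 := by
    apply pow_le_pow_left₀ hm0.le h1
  have h5 : Real.exp (m/2) ^ 4 = Real.exp (2 * m) := by
    rw [← Real.exp_nat_mul]; ring_nf
  have h6 : Real.exp (2 * m) = Real.exp 2 ^ m := Real.exp_mul 2 m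
  have h7 : D ≤ D ^ m := by
    calc D = D ^ (1:ℝ) := (Real.rpow_one D).symm
      _ ≤ D ^ m := Real.rpow_le_rpow_of_exponent_le hD (by linarith)
  calc D * m^4 ≤ D^m * Real.exp 2 ^ m := by
        have : 0 ≤ m^4 := by positivity
        have e2m : 0 ≤ Real.exp 2 ^ m := Real.rpow_nonneg (Real.exp_pos 2).le m
        nlinarith [Real.rpow_nonneg (le_trans zero_le_one hD : (0:ℝ) ≤ D) m,
          h4.trans (le_of_eq (h5.trans h6))]
    _ = (Real.exp 2 * D) ^ m := by
        rw [Real.mul_rpow (Real.exp_pos 2).le (by linarith : (0:ℝ) ≤ D)]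
        ring

end GCE3

namespace GCE4
open GCE GCE2 GCE3

lemma latticeNorm_sub_le (a b : ℤ × ℤ) :
    latticeNorm (a - b) ≤ latticeNorm a + latticeNorm b := by
  rw [sub_eq_add_neg]
  calc latticeNorm (a + -b) ≤ latticeNorm a + latticeNorm (-b) := latticeNorm_add_le a (-b)
    _ = latticeNorm a + latticeNorm b := by rw [latticeNorm_neg]

lemma latticeNorm_zero : latticeNorm ((0,0) : ℤ × ℤ) = 0 := by
  simp [latticeNorm]

lemma exp_one_le_three : Real.exp 1 ≤ 3 := by
  have := Real.exp_one_lt_d9; linarith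

lemma one_le_exp_one : (1:ℝ) ≤ Real.exp 1 := by
  have := Real.add_one_le_exp (1:ℝ); linarith

lemma submul {e a b c : ℝ} (he : 1 ≤ e) (ha : 0 ≤ a) (hb : 0 ≤ b) (hc : 0 ≤ c)
    (hab : c ≤ a + b) : e + c ≤ (e + a) * (e + b) := by nlinarith

lemma one_lt_exp_two_mul {D : ℝ} (hD : 1 ≤ D) : 1 < Real.exp 2 * D := by
  have h2 : (1:ℝ) < Real.exp 2 := by
    have := Real.add_one_le_exp (2:ℝ); linarith
  calc (1:ℝ) < Real.exp 2 := h2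
    _ = Real.exp 2 * 1 := (mul_one _).symm
    _ ≤ Real.exp 2 * D := mul_le_mul_of_nonneg_left hD (Real.exp_pos 2).le

lemma eight_le_exp_three : (8:ℝ) ≤ Real.exp 3 := by
  rw [show (3:ℝ) = 1 + 1 + 1 by norm_num, Real.exp_add, Real.exp_add]
  nlinarith [Real.exp_one_gt_d9]

lemma log_eight_le_three : Real.log 8 ≤ 3 := by
  calc Real.log 8 ≤ Real.log (Real.exp 3) := Real.log_le_log (by norm_num) eight_le_exp_three
    _ = 3 := Real.log_exp 3

lemma coefA2 {A D m : ℝ} (hm : 2 < m) (hA1 : 1 ≤ A) (hD : 2400 * A ≤ D) :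
    1200 * A * m ^ 3 * (m + 1) ≤ D * m ^ 4 := by
  have hm0 : (0:ℝ) < m := by linarith
  nlinarith [mul_nonneg (mul_nonneg (by linarith : (0:ℝ) ≤ 1200 * A)
      (pow_pos hm0 3).le) (by linarith : (0:ℝ) ≤ m - 1),
    mul_nonneg (sub_nonneg.mpr hD) (pow_pos hm0 4).le]

lemma coefA1 {A D R m : ℝ} (hm : 2 < m) (hA1 : 1 ≤ A)
    (hD : 50 * A * (4 * R + 8) ^ 2 ≤ D) :
    (50 * A * m ^ 3 * (4 * R + 8) ^ 2) * (m - 2) ≤ D * m ^ 4 := by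
  have hm0 : (0:ℝ) < m := by linarith
  nlinarith [mul_nonneg (sub_nonneg.mpr hD) (pow_pos hm0 4).le,
    mul_nonneg (mul_nonneg (by linarith : (0:ℝ) ≤ 50 * A) (sq_nonneg (4 * R + 8)))
      (mul_nonneg (pow_pos hm0 3).le (by norm_num : (0:ℝ) ≤ 2))]

lemma near1 {a b r : ℝ} (ha : 0 < a) (hr : 0 ≤ r) (hra : r ≤ a / 2) (hb : a - r ≤ b) :
    (a - b) * a ≤ 2 * r * b := by
  have h0 : (a - b) * a ≤ r * a :=
    mul_le_mul_of_nonneg_right (by linarith) ha.le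
  have h1 : 0 ≤ r * (a - 2 * r) := mul_nonneg hr (by linarith)
  have h2 : r * (a - r) ≤ r * b := mul_le_mul_of_nonneg_left hb hr
  nlinarith [h0, h1, h2]

lemma near2 {a b r : ℝ} (ha : 0 < a) (hr : 0 ≤ r) (hb : b ≤ a + r) :
    (b - a) * a ≤ 2 * r * a := by
  have h0 : (b - a) * a ≤ r * a := mul_le_mul_of_nonneg_right (by linarith) ha.le
  have h1 : 0 ≤ r * a := mul_nonneg hr ha.le
  linarith

lemma farC1 {Cc Xx b r : ℝ} (hC : 0 ≤ Cc) (hX : 0 < Xx) (hr : 1 ≤ r)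
    (hb : 3 * Xx / 8 ≤ b) : Cc / b ≤ 3 * Cc * r / Xx := by
  have hbpos : 0 < b := by linarith
  rw [div_le_div_iff₀ hbpos hX]
  have h1 : Cc * Xx ≤ Cc * (3 * b) := mul_le_mul_of_nonneg_left (by linarith) hC
  have h2 : 3 * Cc * b * 1 ≤ 3 * Cc * b * r :=
    mul_le_mul_of_nonneg_left hr (mul_nonneg (mul_nonneg (by linarith) hC) hbpos.le)
  nlinarith [h1, h2]

lemma farC2 {Cc Xx a r : ℝ} (hC : 0 ≤ Cc) (hX : 0 < Xx) (hr : 1 ≤ r)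
    (ha : Xx / 2 ≤ a) : Cc / a ≤ 2 * Cc * r / Xx := by
  have hapos : 0 < a := by linarith
  rw [div_le_div_iff₀ hapos hX]
  have h1 : Cc * Xx ≤ Cc * (2 * a) := mul_le_mul_of_nonneg_left (by linarith) hC
  have h2 : 2 * Cc * a * 1 ≤ 2 * Cc * a * r :=
    mul_le_mul_of_nonneg_left hr (mul_nonneg (mul_nonneg (by linarith) hC) hapos.le)
  nlinarith [h1, h2]

lemma logfac {a Xx r d : ℝ} (hX : 0 < Xx) (ha : Xx / 2 ≤ a) (hr : 0 < r) (hd : 0 ≤ d)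
    (hld : d ≤ 2 * r / a) : 1 / (2 * Real.pi) * d ≤ r / Xx := by
  have hpi := Real.pi_gt_three
  have hapos : 0 < a := by linarith
  have h1 : 1 / (2 * Real.pi) * d ≤ 1 / (2 * Real.pi) * (2 * r / a) :=
    mul_le_mul_of_nonneg_left hld (by positivity)
  have h2 : 1 / (2 * Real.pi) * (2 * r / a) = r / (Real.pi * a) := by
    field_simp
  have h3 : r / (Real.pi * a) ≤ r / Xx := by
    rw [div_le_div_iff₀ (by positivity) hX]
    have hπa : Xx ≤ Real.pi * a := by nlinarith
    exact mul_le_mul_of_nonneg_left hπa hr.le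
  linarith

lemma coefB {A C D m : ℝ} (hm : 2 < m) (hA1 : 1 ≤ A) (hC : 0 < C)
    (hD : 9 * (1 + 6 * C) + 5184 * A ≤ D) :
    (1 + 6 * C) * (1 + 4 / (m - 2)) ^ 2 +
      3 * A * (1 + 4 / (m - 2)) * (1 + 11 / (m - 2)) ^ 2 * (8 * (m + 1) / (m - 2)) ≤
    D * m ^ 4 / (m - 2) ^ 4 := by
  have hε : (0:ℝ) < m - 2 := by linarith
  have hm0 : (0:ℝ) < m := by linarith
  have h6C : (0:ℝ) ≤ 1 + 6 * C := by linarith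
  have hQ4 : 1 + 4 / (m - 2) ≤ 3 * m / (m - 2) := by
    have e : 1 + 4 / (m - 2) = (m + 2) / (m - 2) := by field_simp; ring
    rw [e]; exact (div_le_div_iff_of_pos_right hε).mpr (by linarith)
  have hQ40 : (0:ℝ) ≤ 1 + 4 / (m - 2) := by positivity
  have hQ11 : 1 + 11 / (m - 2) ≤ 6 * m / (m - 2) := by
    have e : 1 + 11 / (m - 2) = (m + 9) / (m - 2) := by field_simp; ring
    rw [e]; exact (div_le_div_iff_of_pos_right hε).mpr (by linarith)
  have hQ110 : (0:ℝ) ≤ 1 + 11 / (m - 2) := by positivity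
  have hQ8 : 8 * (m + 1) / (m - 2) ≤ 16 * m / (m - 2) := by
    exact (div_le_div_iff_of_pos_right hε).mpr (by linarith)
  have hQ80 : (0:ℝ) ≤ 8 * (m + 1) / (m - 2) := by positivity
  have hmε0 : (0:ℝ) ≤ 3 * m / (m - 2) := by positivity
  have ht1 : (1 + 6 * C) * (1 + 4 / (m - 2)) ^ 2 ≤ (1 + 6 * C) * (3 * m / (m - 2)) ^ 2 :=
    mul_le_mul_of_nonneg_left (pow_le_pow_left₀ hQ40 hQ4 2) h6C
  have ht2 : 3 * A * (1 + 4 / (m - 2)) * (1 + 11 / (m - 2)) ^ 2 * (8 * (m + 1) / (m - 2)) ≤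
      3 * A * (3 * m / (m - 2)) * (6 * m / (m - 2)) ^ 2 * (16 * m / (m - 2)) := by
    have hA0 : (0:ℝ) ≤ 3 * A := by linarith
    have f1 : 3 * A * (1 + 4 / (m - 2)) ≤ 3 * A * (3 * m / (m - 2)) :=
      mul_le_mul_of_nonneg_left hQ4 hA0
    have f10 : (0:ℝ) ≤ 3 * A * (1 + 4 / (m - 2)) := mul_nonneg hA0 hQ40
    have f2 : 3 * A * (1 + 4 / (m - 2)) * (1 + 11 / (m - 2)) ^ 2 ≤
        3 * A * (3 * m / (m - 2)) * (6 * m / (m - 2)) ^ 2 :=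
      mul_le_mul f1 (pow_le_pow_left₀ hQ110 hQ11 2) (sq_nonneg _) (mul_nonneg hA0 hmε0)
    have f20 : (0:ℝ) ≤ 3 * A * (1 + 4 / (m - 2)) * (1 + 11 / (m - 2)) ^ 2 :=
      mul_nonneg f10 (sq_nonneg _)
    exact mul_le_mul f2 hQ8 hQ80
      (mul_nonneg (mul_nonneg hA0 hmε0) (sq_nonneg _))
  have heq : (1 + 6 * C) * (3 * m / (m - 2)) ^ 2 +
      3 * A * (3 * m / (m - 2)) * (6 * m / (m - 2)) ^ 2 * (16 * m / (m - 2)) =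
      (9 * (1 + 6 * C) * m ^ 2 * (m - 2) ^ 2 + 5184 * A * m ^ 4) / (m - 2) ^ 4 := by
    field_simp; ring
  have hε2 : (m - 2) ^ 2 ≤ m ^ 2 := by nlinarith
  have h1 : 9 * (1 + 6 * C) * m ^ 2 * (m - 2) ^ 2 ≤ 9 * (1 + 6 * C) * m ^ 2 * m ^ 2 :=
    mul_le_mul_of_nonneg_left hε2 (mul_nonneg (by linarith) (sq_nonneg m))
  have e4 : m ^ 2 * m ^ 2 = m ^ 4 := by ring
  have h2 : (0:ℝ) ≤ (D - (9 * (1 + 6 * C) + 5184 * A)) * m ^ 4 :=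
    mul_nonneg (sub_nonneg.mpr hD) (by positivity)
  have hfin : 9 * (1 + 6 * C) * m ^ 2 * (m - 2) ^ 2 + 5184 * A * m ^ 4 ≤ D * m ^ 4 := by
    nlinarith [h1, h2]
  calc (1 + 6 * C) * (1 + 4 / (m - 2)) ^ 2 +
      3 * A * (1 + 4 / (m - 2)) * (1 + 11 / (m - 2)) ^ 2 * (8 * (m + 1) / (m - 2))
      ≤ (1 + 6 * C) * (3 * m / (m - 2)) ^ 2 +
        3 * A * (3 * m / (m - 2)) * (6 * m / (m - 2)) ^ 2 * (16 * m / (m - 2)) :=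
        add_le_add ht1 ht2
    _ = (9 * (1 + 6 * C) * m ^ 2 * (m - 2) ^ 2 + 5184 * A * m ^ 4) / (m - 2) ^ 4 := heq
    _ ≤ D * m ^ 4 / (m - 2) ^ 4 := (div_le_div_iff_of_pos_right (by positivity)).mpr hfin

end GCE4


set_option maxHeartbeats 4000000 in
open GCE GCE2 GCE3 GCE4 in
/-- Pointwise decay estimate for `Φ₀ ∗ f` when `f ∈ ℓ^∞_m(ℤ²)`, `m > 2`, has
vanishing total sum. -/
theorem green_convolution_estimate (Φ₀ : ℤ × ℤ → ℝ)
    (hΦeq : ∀ x : ℤ × ℤ, -latticeLap Φ₀ x = if x = (0, 0) then 1 else 0)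
    (hΦ0 : Φ₀ (0, 0) = 0)
    (hasymp : ∃ C R : ℝ, 0 < C ∧ 0 < R ∧ ∀ x : ℤ × ℤ, R ≤ latticeNorm x →
      |Φ₀ x + (1 / (2 * Real.pi)) * Real.log (latticeNorm x) + gamma₀ / 2| ≤
        C / latticeNorm x) :
    ∃ c₀ : ℝ, 1 < c₀ ∧
      ∀ (m : ℝ), 2 < m → ∀ (f : ℤ × ℤ → ℝ) (N : ℝ),
        (∀ x, |f x| * (1 + latticeNorm x) ^ m ≤ N) →
        HasSum f 0 →
        ∀ x : ℤ × ℤ,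
          |∑' y : ℤ × ℤ, Φ₀ (y - x) * f y| ≤
            (c₀ ^ m / (m - 2) ^ 4) * N *
              (Real.exp 1 + latticeNorm x) ^ ((2 - m) / (m + 1)) *
              (Real.log (Real.exp 1 + latticeNorm x)) ^ (1 / (m + 1)) := by
  obtain ⟨C, R, hC, hR, hΦ⟩ := hasymp
  -- uniform logarithmic bound on Φ₀
  have hball : {z : ℤ × ℤ | latticeNorm z ≤ R}.Finite := by
    apply Set.Finite.subset (Set.finite_Icc ((-⌈R⌉, -⌈R⌉) : ℤ × ℤ) ((⌈R⌉, ⌈R⌉) : ℤ × ℤ))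
    intro z hz
    simp only [Set.mem_setOf_eq] at hz
    obtain ⟨h1, h2⟩ := latticeNorm_coord_le z
    have hc1 : |(z.1 : ℝ)| ≤ (⌈R⌉ : ℝ) := le_trans (h1.trans hz) (Int.le_ceil R)
    have hc2 : |(z.2 : ℝ)| ≤ (⌈R⌉ : ℝ) := le_trans (h2.trans hz) (Int.le_ceil R)
    have hz1 : |z.1| ≤ ⌈R⌉ := by exact_mod_cast hc1
    have hz2 : |z.2| ≤ ⌈R⌉ := by exact_mod_cast hc2
    rw [Set.mem_Icc]
    constructor
    · exact ⟨neg_le_of_abs_le hz1, neg_le_of_abs_le hz2⟩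
    · exact ⟨le_of_abs_le hz1, le_of_abs_le hz2⟩
  obtain ⟨M, hM0, hM⟩ : ∃ M : ℝ, 0 ≤ M ∧ ∀ z : ℤ × ℤ, latticeNorm z ≤ R → |Φ₀ z| ≤ M := by
    obtain ⟨M0, hM0⟩ := (hball.image (fun z => |Φ₀ z|)).bddAbove
    refine ⟨max M0 0, le_max_right _ _, fun z hz => ?_⟩
    exact le_trans (hM0 (Set.mem_image_of_mem _ hz)) (le_max_left _ _)
  set A : ℝ := M + 1 + |gamma₀| + C with hAdef
  have hA1 : 1 ≤ A := by
    have := abs_nonneg gamma₀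
    simp only [hAdef]; linarith
  have hAlog : ∀ z : ℤ × ℤ, |Φ₀ z| ≤ A * Real.log (Real.exp 1 + latticeNorm z) := by
    intro z
    have hzn := latticeNorm_nonneg z
    have hlog1 : 1 ≤ Real.log (Real.exp 1 + latticeNorm z) := by
      calc (1:ℝ) = Real.log (Real.exp 1) := (Real.log_exp 1).symm
        _ ≤ _ := Real.log_le_log (Real.exp_pos 1) (by linarith)
    by_cases hz : latticeNorm z ≤ R
    · have h1 := hM z hz
      have hMA : M ≤ A := by
        have := abs_nonneg gamma₀
        simp only [hAdef]; linarith
      nlinarith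
    · push_neg at hz
      have hz0 : z ≠ 0 := by
        intro h
        rw [h] at hz
        have : latticeNorm (0 : ℤ × ℤ) = 0 := latticeNorm_zero
        rw [this] at hz; linarith
      have hz1 : 1 ≤ latticeNorm z := one_le_latticeNorm hz0
      have hf := hΦ z hz.le
      set B : ℝ := (1 / (2 * Real.pi)) * Real.log (latticeNorm z) + gamma₀ / 2 with hB
      have htri : |Φ₀ z| ≤ |Φ₀ z + B| + |B| := by
        have := abs_sub_abs_le_abs_sub (Φ₀ z + B) B
        have h2 : |Φ₀ z + B - B| = |Φ₀ z| := by ring_nf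
        calc |Φ₀ z| = |Φ₀ z + B - B| := by ring_nf
          _ ≤ |Φ₀ z + B| + |B| := abs_sub _ _
      have h2 : |Φ₀ z + B| ≤ C / latticeNorm z := by
        rw [hB]; convert hf using 2; ring
      have h3 : C / latticeNorm z ≤ C := by
        apply div_le_self hC.le hz1
      have hpi : (1:ℝ) / (2 * Real.pi) ≤ 1 := by
        have := Real.pi_gt_three
        rw [div_le_one (by linarith)]; linarith
      have hlogz0 : 0 ≤ Real.log (latticeNorm z) := Real.log_nonneg hz1
      have hlogzle : Real.log (latticeNorm z) ≤ Real.log (Real.exp 1 + latticeNorm z) := by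
        apply Real.log_le_log (by linarith)
        nlinarith [Real.exp_pos 1]
      have h4 : |B| ≤ Real.log (Real.exp 1 + latticeNorm z) + |gamma₀| / 2 := by
        rw [hB]
        calc |(1 / (2 * Real.pi)) * Real.log (latticeNorm z) + gamma₀ / 2|
            ≤ |(1 / (2 * Real.pi)) * Real.log (latticeNorm z)| + |gamma₀ / 2| := abs_add_le _ _
          _ ≤ Real.log (Real.exp 1 + latticeNorm z) + |gamma₀| / 2 := by
              rw [abs_div, abs_mul]
              have hpi2 : |(1:ℝ) / (2 * Real.pi)| ≤ 1 := by
                rw [abs_of_nonneg (by positivity : (0:ℝ) ≤ 1 / (2 * Real.pi))]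
                exact hpi
              have habs2 : |(2:ℝ)| = 2 := by norm_num
              rw [abs_of_nonneg hlogz0, habs2]
              nlinarith [mul_le_mul_of_nonneg_right hpi2 hlogz0]
      have hfin : |Φ₀ z| ≤ C + Real.log (Real.exp 1 + latticeNorm z) + |gamma₀| / 2 := by
        linarith
      have hMA2 : 0 ≤ M := hM0
      simp only [hAdef]
      nlinarith [abs_nonneg gamma₀]
  clear_value A
  -- the universal constant
  set D : ℝ := 9 * (1 + 6 * C) + 5184 * A + 50 * A * (4 * R + 8) ^ 2 + 2400 * A + 1 with hDdef
  have hD1 : 1 ≤ D := by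
    have h1 : (0:ℝ) ≤ 50 * A * (4 * R + 8) ^ 2 :=
      mul_nonneg (by linarith) (sq_nonneg _)
    simp only [hDdef]; nlinarith
  clear_value D
  refine ⟨Real.exp 2 * D, one_lt_exp_two_mul hD1, ?_⟩
  intro m hm f N hfN hf0 x
  set c₀ : ℝ := Real.exp 2 * D with hc₀def
  have hc₀1 : 1 ≤ c₀ := by
    rw [hc₀def]; exact (one_lt_exp_two_mul hD1).le
  clear_value c₀
  have hε : 0 < m - 2 := by linarith
  have hm1 : (0:ℝ) < m + 1 := by linarith
  set X : ℝ := Real.exp 1 + latticeNorm x with hXdef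
  have hXe : Real.exp 1 ≤ X := by
    simp only [hXdef, le_add_iff_nonneg_right]; exact latticeNorm_nonneg x
  have hX1 : 1 ≤ X := le_trans one_le_exp_one hXe
  have hXpos : (0:ℝ) < X := by linarith
  have hL1 : 1 ≤ Real.log X := by
    calc (1:ℝ) = Real.log (Real.exp 1) := (Real.log_exp 1).symm
      _ ≤ Real.log X := Real.log_le_log (Real.exp_pos 1) hXe
  set p : ℝ := (2 - m) / (m + 1) with hpdef
  set θ : ℝ := (m - 2) / (m + 1) with hθdef
  have hθpos : 0 < θ := by apply div_pos <;> linarith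
  have hθ1 : θ ≤ 1 := by
    rw [hθdef, div_le_one hm1]; linarith
  have hpθ : p = -θ := by rw [hpdef, hθdef]; ring_nf
  have hXppos : 0 < X ^ p := Real.rpow_pos_of_pos hXpos p
  clear_value X p θ
  have hN : 0 ≤ N := by
    have := hfN ((0,0) : ℤ × ℤ)
    rw [latticeNorm_zero] at this
    simp only [add_zero, Real.one_rpow, mul_one] at this
    exact le_trans (abs_nonneg _) this
  have hfabs : ∀ y : ℤ × ℤ, |f y| ≤ N * (1 + latticeNorm y) ^ (-m) := by
    intro y
    have h1 := hfN y
    have h2 : (0:ℝ) < (1 + latticeNorm y) ^ m :=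
      Real.rpow_pos_of_pos (one_add_latticeNorm_pos y) m
    rw [Real.rpow_neg (one_add_latticeNorm_pos y).le, ← div_eq_mul_inv, le_div_iff₀ h2]
    exact h1
  have habsorb : D * m ^ 4 ≤ c₀ ^ m := by
    rw [hc₀def]; exact absorb hD1 hm
  have hc₀m : (0:ℝ) < c₀ ^ m := Real.rpow_pos_of_pos (by linarith) m
  -- reduce to the bound without the logarithmic factor
  suffices key : |∑' y : ℤ × ℤ, Φ₀ (y - x) * f y| ≤ c₀ ^ m / (m - 2) ^ 4 * N * X ^ p by
    have hLq : 1 ≤ (Real.log X) ^ (1 / (m + 1)) :=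
      Real.one_le_rpow hL1 (by positivity)
    have hpre : 0 ≤ c₀ ^ m / (m - 2) ^ 4 * N * X ^ p := by
      apply mul_nonneg (mul_nonneg (div_nonneg hc₀m.le (by positivity)) hN) hXppos.le
    calc |∑' y : ℤ × ℤ, Φ₀ (y - x) * f y| ≤ c₀ ^ m / (m - 2) ^ 4 * N * X ^ p := key
      _ = c₀ ^ m / (m - 2) ^ 4 * N * X ^ p * 1 := by ring
      _ ≤ c₀ ^ m / (m - 2) ^ 4 * N * X ^ p * (Real.log X) ^ (1 / (m + 1)) := by
          exact mul_le_mul_of_nonneg_left hLq hpre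
  by_cases hcase : 4 * R + 8 ≤ X ∧ (8:ℝ) ≤ X ^ θ
  · -- CASE B : decay via cancellation
    obtain ⟨hXR, hXθ8⟩ := hcase
    have hXθX : X ^ θ ≤ X := by
      calc X ^ θ ≤ X ^ (1:ℝ) := Real.rpow_le_rpow_of_exponent_le hX1 hθ1
        _ = X := Real.rpow_one X
    have hX8 : (8:ℝ) ≤ X := le_trans hXθ8 hXθX
    set r : ℝ := X ^ (3 / (m + 1)) with hrdef
    have hr1 : 1 ≤ r := Real.one_le_rpow hX1 (by positivity)
    have hrpos : (0:ℝ) < r := by linarith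
    have hrXp : r = X * X ^ p := by
      have e : (3:ℝ) / (m + 1) = 1 + p := by rw [hpdef]; field_simp; ring
      rw [hrdef, e, Real.rpow_add hXpos, Real.rpow_one]
    have hXpXθ : X ^ θ * X ^ p = 1 := by
      rw [← Real.rpow_add hXpos, hpθ]; simp
    have hXple : X ^ p ≤ 1 / 8 := by
      have e : X ^ p = (X ^ θ)⁻¹ := by rw [hpθ, Real.rpow_neg hXpos.le]
      rw [e]
      calc (X ^ θ)⁻¹ ≤ (8:ℝ)⁻¹ := inv_anti₀ (by norm_num) hXθ8
        _ = 1 / 8 := by norm_num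
    have hr8 : r ≤ X / 8 := by
      rw [hrXp]
      calc X * X ^ p ≤ X * (1 / 8) := mul_le_mul_of_nonneg_left hXple hXpos.le
        _ = X / 8 := by ring
    have hxlb : X / 2 ≤ latticeNorm x := by
      have he3 : Real.exp 1 ≤ 3 := exp_one_le_three
      have e : latticeNorm x = X - Real.exp 1 := by rw [hXdef]; ring
      rw [e]; linarith
    have hxR : R ≤ latticeNorm x := by linarith
    set β : ℝ := 3 * (m - 2) / 8 with hβdef
    set s' : ℝ := (3 * m + 10) / 8 with hs'def
    set δ : ℝ := (m - 2) / 4 with hδdef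
    have hβpos : 0 < β := by rw [hβdef]; linarith
    have hs' : 2 < s' := by rw [hs'def]; linarith
    have hδpos : 0 < δ := by rw [hδdef]; linarith
    have hδinv : 1 / δ = 4 / (m - 2) := by rw [hδdef, one_div_div]
    set K₁ : ℝ := (1 + 6 * C) * (r / X) * N with hK₁def
    set K₂ : ℝ := 3 * A * (1 + 4 / (m - 2)) * Real.log X * (1 + r) ^ (-β) * N with hK₂def
    have hQ1 : (1:ℝ) ≤ 1 + 4 / (m - 2) := by
      have : (0:ℝ) < 4 / (m - 2) := by positivity
      linarith
    have hK₁0 : 0 ≤ K₁ := by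
      rw [hK₁def]
      exact mul_nonneg (mul_nonneg (by linarith) (div_nonneg hrpos.le hXpos.le)) hN
    have hK₂0 : 0 ≤ K₂ := by
      rw [hK₂def]
      exact mul_nonneg (mul_nonneg (mul_nonneg (mul_nonneg (by linarith) (by linarith))
        (by linarith)) (Real.rpow_nonneg (by linarith) _)) hN
    have hnx : latticeNorm (-x) = latticeNorm x := latticeNorm_neg x
    -- pointwise bound
    have hpoint : ∀ y : ℤ × ℤ, |(Φ₀ (y - x) - Φ₀ (-x)) * f y| ≤
        K₁ * (1 + latticeNorm y) ^ (-m) + K₂ * (1 + latticeNorm y) ^ (-s') := by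
      intro y
      have hyn := latticeNorm_nonneg y
      have hy1 : (0:ℝ) < 1 + latticeNorm y := one_add_latticeNorm_pos y
      rcases le_or_gt (latticeNorm y) r with hy | hy
      · -- near regime : |y| ≤ r
        have htri1 : latticeNorm x ≤ latticeNorm y + latticeNorm (y - x) := by
          calc latticeNorm x = latticeNorm (y - (y - x)) := by rw [sub_sub_cancel]
            _ ≤ latticeNorm y + latticeNorm (y - x) := latticeNorm_sub_le y (y - x)
        have htri2 : latticeNorm (y - x) ≤ latticeNorm y + latticeNorm x :=
          latticeNorm_sub_le y x
        have hblb : 3 * X / 8 ≤ latticeNorm (y - x) := by linarith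
        have hbub : latticeNorm (y - x) ≤ latticeNorm x + r := by linarith
        have hbR : R ≤ latticeNorm (y - x) := by linarith
        have hf1 := hΦ (y - x) hbR
        have hf2 := hΦ (-x) (by rw [hnx]; exact hxR)
        rw [hnx] at hf2
        have hapos : (0:ℝ) < latticeNorm x := by linarith
        have hbpos : (0:ℝ) < latticeNorm (y - x) := by linarith
        have hra : r ≤ latticeNorm x / 2 := by linarith
        have hba_lb : latticeNorm x - r ≤ latticeNorm (y - x) := by linarith
        have hlogdiff : |Real.log (latticeNorm (y - x)) - Real.log (latticeNorm x)| ≤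
            2 * r / latticeNorm x := by
          rw [abs_le]
          constructor
          · have h2 : Real.log (latticeNorm x) - Real.log (latticeNorm (y - x)) =
                Real.log (latticeNorm x / latticeNorm (y - x)) :=
              (Real.log_div (ne_of_gt hapos) (ne_of_gt hbpos)).symm
            have h3 : Real.log (latticeNorm x / latticeNorm (y - x)) ≤
                latticeNorm x / latticeNorm (y - x) - 1 :=
              Real.log_le_sub_one_of_pos (by positivity)
            have h4 : latticeNorm x / latticeNorm (y - x) - 1 ≤ 2 * r / latticeNorm x := by
              rw [div_sub_one (ne_of_gt hbpos), div_le_div_iff₀ hbpos hapos]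
              exact near1 hapos (by linarith) hra hba_lb
            linarith
          · have h2 : Real.log (latticeNorm (y - x)) - Real.log (latticeNorm x) =
                Real.log (latticeNorm (y - x) / latticeNorm x) :=
              (Real.log_div (ne_of_gt hbpos) (ne_of_gt hapos)).symm
            have h3 : Real.log (latticeNorm (y - x) / latticeNorm x) ≤
                latticeNorm (y - x) / latticeNorm x - 1 :=
              Real.log_le_sub_one_of_pos (by positivity)
            have h4 : latticeNorm (y - x) / latticeNorm x - 1 ≤ 2 * r / latticeNorm x := by
              rw [div_sub_one (ne_of_gt hapos), div_le_div_iff₀ hapos hapos]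
              exact near2 hapos (by linarith) hbub
            linarith
        have hgb : |Φ₀ (y - x) - Φ₀ (-x)| ≤ (1 + 6 * C) * (r / X) := by
          have key : Φ₀ (y - x) - Φ₀ (-x) =
              (Φ₀ (y - x) + 1 / (2 * Real.pi) * Real.log (latticeNorm (y - x)) + gamma₀ / 2) -
              (Φ₀ (-x) + 1 / (2 * Real.pi) * Real.log (latticeNorm x) + gamma₀ / 2) -
              (1 / (2 * Real.pi)) *
                (Real.log (latticeNorm (y - x)) - Real.log (latticeNorm x)) := by ring
          have habs : |Φ₀ (y - x) - Φ₀ (-x)| ≤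
              C / latticeNorm (y - x) + C / latticeNorm x +
              (1 / (2 * Real.pi)) *
                |Real.log (latticeNorm (y - x)) - Real.log (latticeNorm x)| := by
            rw [key]
            have hpiabs : |(1:ℝ) / (2 * Real.pi)| = 1 / (2 * Real.pi) :=
              abs_of_nonneg (by positivity)
            calc |_ - _ - _| ≤ |_ - _| + |(1 / (2 * Real.pi)) *
                (Real.log (latticeNorm (y - x)) - Real.log (latticeNorm x))| := abs_sub _ _
              _ ≤ |_| + |_| + |(1 / (2 * Real.pi)) *
                (Real.log (latticeNorm (y - x)) - Real.log (latticeNorm x))| := by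
                  exact add_le_add_left (abs_sub _ _) _
              _ ≤ C / latticeNorm (y - x) + C / latticeNorm x + (1 / (2 * Real.pi)) *
                |Real.log (latticeNorm (y - x)) - Real.log (latticeNorm x)| := by
                  rw [abs_mul, hpiabs]
                  exact add_le_add (add_le_add hf1 hf2) le_rfl
          have hb1 : C / latticeNorm (y - x) ≤ 3 * C * r / X :=
            farC1 hC.le hXpos hr1 hblb
          have hb2 : C / latticeNorm x ≤ 2 * C * r / X :=
            farC2 hC.le hXpos hr1 hxlb
          have hb3 : (1 / (2 * Real.pi)) *
              |Real.log (latticeNorm (y - x)) - Real.log (latticeNorm x)| ≤ r / X :=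
            logfac hXpos hxlb hrpos (abs_nonneg _) hlogdiff
          calc |Φ₀ (y - x) - Φ₀ (-x)| ≤ _ := habs
            _ ≤ 3 * C * r / X + 2 * C * r / X + r / X := by
                exact add_le_add (add_le_add hb1 hb2) hb3
            _ = (1 + 5 * C) * (r / X) := by ring
            _ ≤ (1 + 6 * C) * (r / X) := by
                apply mul_le_mul_of_nonneg_right (by linarith) (div_nonneg hrpos.le hXpos.le)
        have hterm2 : (0:ℝ) ≤ K₂ * (1 + latticeNorm y) ^ (-s') :=
          mul_nonneg hK₂0 (Real.rpow_nonneg (by linarith) _)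
        calc |(Φ₀ (y - x) - Φ₀ (-x)) * f y| = |Φ₀ (y - x) - Φ₀ (-x)| * |f y| := abs_mul _ _
          _ ≤ ((1 + 6 * C) * (r / X)) * (N * (1 + latticeNorm y) ^ (-m)) :=
              mul_le_mul hgb (hfabs y) (abs_nonneg _)
                (mul_nonneg (by linarith) (div_nonneg hrpos.le hXpos.le))
          _ = K₁ * (1 + latticeNorm y) ^ (-m) := by rw [hK₁def]; ring
          _ ≤ K₁ * (1 + latticeNorm y) ^ (-m) + K₂ * (1 + latticeNorm y) ^ (-s') :=
              le_add_of_nonneg_right hterm2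
      · -- far regime : |y| > r
        have heyx : (0:ℝ) < Real.exp 1 + latticeNorm (y - x) := by
          have := latticeNorm_nonneg (y - x); linarith [Real.exp_pos 1]
        have hey : (0:ℝ) < Real.exp 1 + latticeNorm y := by
          linarith [Real.exp_pos 1]
        have hsubmul : Real.exp 1 + latticeNorm (y - x) ≤ X * (Real.exp 1 + latticeNorm y) := by
          rw [hXdef]
          exact submul one_le_exp_one (latticeNorm_nonneg x) hyn
            (latticeNorm_nonneg (y - x)) (by linarith [latticeNorm_sub_le y x])
        have hlog2 : Real.log (Real.exp 1 + latticeNorm (y - x)) ≤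
            Real.log X + Real.log (Real.exp 1 + latticeNorm y) := by
          have h := Real.log_le_log heyx hsubmul
          rwa [Real.log_mul (ne_of_gt hXpos) (ne_of_gt hey)] at h
        have hΦ1 : |Φ₀ (y - x)| ≤ A * (Real.log X + Real.log (Real.exp 1 + latticeNorm y)) :=
          (hAlog (y - x)).trans (mul_le_mul_of_nonneg_left hlog2 (by linarith))
        have hΦ2 : |Φ₀ (-x)| ≤ A * Real.log X := by
          have h := hAlog (-x)
          rwa [hnx, ← hXdef] at h
        have hlogy : Real.log (Real.exp 1 + latticeNorm y) ≤
            (1 + 4 / (m - 2)) * (1 + latticeNorm y) ^ δ := by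
          have h := log_e_add_le hδpos hyn
          rwa [hδinv] at h
        have hpow1 : 1 ≤ (1 + latticeNorm y) ^ δ := Real.one_le_rpow (by linarith) hδpos.le
        have hgb : |Φ₀ (y - x) - Φ₀ (-x)| ≤
            3 * A * (1 + 4 / (m - 2)) * Real.log X * (1 + latticeNorm y) ^ δ := by
          have hQP1 : (1:ℝ) ≤ (1 + 4 / (m - 2)) * (1 + latticeNorm y) ^ δ := by
            calc (1:ℝ) = 1 * 1 := (mul_one 1).symm
              _ ≤ (1 + 4 / (m - 2)) * (1 + latticeNorm y) ^ δ :=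
                mul_le_mul hQ1 hpow1 (by norm_num) (by linarith)
          have e1 : Real.log X ≤ Real.log X * ((1 + 4 / (m - 2)) * (1 + latticeNorm y) ^ δ) :=
            le_mul_of_one_le_right (by linarith) hQP1
          have e2 : (1 + 4 / (m - 2)) * (1 + latticeNorm y) ^ δ ≤
              Real.log X * ((1 + 4 / (m - 2)) * (1 + latticeNorm y) ^ δ) :=
            le_mul_of_one_le_left (mul_nonneg (by linarith) (by linarith)) hL1
          have hA0 : (0:ℝ) ≤ A := by linarith
          have htr : |Φ₀ (y - x) - Φ₀ (-x)| ≤ |Φ₀ (y - x)| + |Φ₀ (-x)| := abs_sub _ _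
          have hc1 : A * (Real.log X + Real.log (Real.exp 1 + latticeNorm y)) ≤
              A * (Real.log X + (1 + 4 / (m - 2)) * (1 + latticeNorm y) ^ δ) :=
            mul_le_mul_of_nonneg_left (by linarith) hA0
          have hc2 : A * (Real.log X + (1 + 4 / (m - 2)) * (1 + latticeNorm y) ^ δ) +
              A * Real.log X ≤
              3 * A * (1 + 4 / (m - 2)) * Real.log X * (1 + latticeNorm y) ^ δ := by
            have g1 := mul_le_mul_of_nonneg_left e1 hA0
            have g2 := mul_le_mul_of_nonneg_left e2 hA0
            linarith [g1, g2]
          linarith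
        have hsplit : (1 + latticeNorm y) ^ δ * (1 + latticeNorm y) ^ (-m) =
            (1 + latticeNorm y) ^ (-β) * (1 + latticeNorm y) ^ (-s') := by
          rw [← Real.rpow_add hy1, ← Real.rpow_add hy1]
          congr 1
          rw [hβdef, hs'def, hδdef]; ring
        have hmono : (1 + latticeNorm y) ^ (-β) ≤ (1 + r) ^ (-β) :=
          rpow_neg_anti (by linarith) (by linarith) hβpos.le
        have hcoef0 : (0:ℝ) ≤ 3 * A * (1 + 4 / (m - 2)) * Real.log X * N :=
          mul_nonneg (mul_nonneg (mul_nonneg (by linarith) (by linarith)) (by linarith)) hN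
        have hterm1 : (0:ℝ) ≤ K₁ * (1 + latticeNorm y) ^ (-m) :=
          mul_nonneg hK₁0 (Real.rpow_nonneg (by linarith) _)
        calc |(Φ₀ (y - x) - Φ₀ (-x)) * f y| = |Φ₀ (y - x) - Φ₀ (-x)| * |f y| := abs_mul _ _
          _ ≤ (3 * A * (1 + 4 / (m - 2)) * Real.log X * (1 + latticeNorm y) ^ δ) *
              (N * (1 + latticeNorm y) ^ (-m)) := by
              apply mul_le_mul hgb (hfabs y) (abs_nonneg _)
              exact mul_nonneg (mul_nonneg (mul_nonneg (mul_nonneg (by linarith) (by linarith))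
                (by linarith)) (by linarith)) (by linarith)
          _ = (3 * A * (1 + 4 / (m - 2)) * Real.log X * N) *
              ((1 + latticeNorm y) ^ δ * (1 + latticeNorm y) ^ (-m)) := by ring
          _ = (3 * A * (1 + 4 / (m - 2)) * Real.log X * N) *
              ((1 + latticeNorm y) ^ (-β) * (1 + latticeNorm y) ^ (-s')) := by rw [hsplit]
          _ ≤ (3 * A * (1 + 4 / (m - 2)) * Real.log X * N) *
              ((1 + r) ^ (-β) * (1 + latticeNorm y) ^ (-s')) := by
              apply mul_le_mul_of_nonneg_left _ hcoef0
              exact mul_le_mul_of_nonneg_right hmono (Real.rpow_nonneg (by linarith) _)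
          _ = K₂ * (1 + latticeNorm y) ^ (-s') := by rw [hK₂def]; ring
          _ ≤ K₁ * (1 + latticeNorm y) ^ (-m) + K₂ * (1 + latticeNorm y) ^ (-s') :=
              le_add_of_nonneg_left hterm1
    obtain ⟨hSg, hbd⟩ := tsum_bound_two hm hs' hK₁0 hK₂0 hpoint
    -- rewrite the sum using the cancellation
    have hconv : ∑' y : ℤ × ℤ, Φ₀ (y - x) * f y =
        ∑' y : ℤ × ℤ, (Φ₀ (y - x) - Φ₀ (-x)) * f y := by
      have hfeq : ∀ y : ℤ × ℤ, Φ₀ (y - x) * f y =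
          (Φ₀ (y - x) - Φ₀ (-x)) * f y + Φ₀ (-x) * f y := fun y => by ring
      have hsum2 : Summable (fun y : ℤ × ℤ => Φ₀ (-x) * f y) := hf0.summable.mul_left _
      calc ∑' y : ℤ × ℤ, Φ₀ (y - x) * f y
          = ∑' y : ℤ × ℤ, ((Φ₀ (y - x) - Φ₀ (-x)) * f y + Φ₀ (-x) * f y) := tsum_congr hfeq
        _ = (∑' y : ℤ × ℤ, (Φ₀ (y - x) - Φ₀ (-x)) * f y) + ∑' y : ℤ × ℤ, Φ₀ (-x) * f y :=
            Summable.tsum_add hSg hsum2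
        _ = (∑' y : ℤ × ℤ, (Φ₀ (y - x) - Φ₀ (-x)) * f y) + Φ₀ (-x) * ∑' y : ℤ × ℤ, f y := by
            rw [tsum_mul_left]
        _ = ∑' y : ℤ × ℤ, (Φ₀ (y - x) - Φ₀ (-x)) * f y := by
            rw [hf0.tsum_eq]; ring
    -- coefficient work
    have hrX : r / X = X ^ p := by
      rw [hrXp, mul_comm, mul_div_assoc, div_self (ne_of_gt hXpos), mul_one]
    have h4s' : 4 / (s' - 2) ≤ 11 / (m - 2) := by
      have e : s' - 2 = 3 * (m - 2) / 8 := by rw [hs'def]; ring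
      rw [e, div_le_div_iff₀ (by linarith) hε]
      linarith
    have hs'0 : (0:ℝ) ≤ 1 + 4 / (s' - 2) := by
      have h : (0:ℝ) < s' - 2 := by linarith
      positivity
    have hlogr : Real.log X * (1 + r) ^ (-β) ≤ 8 * (m + 1) / (m - 2) * X ^ p := by
      have h1 : (1 + r) ^ (-β) ≤ r ^ (-β) := rpow_neg_anti hrpos (by linarith) hβpos.le
      have h2 : r ^ (-β) = X ^ (3 / (m + 1) * (-β)) := by
        rw [hrdef, ← Real.rpow_mul hXpos.le]
      have hδ'pos : (0:ℝ) < (m - 2) / (8 * (m + 1)) := by positivity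
      have h3 : Real.log X ≤ 8 * (m + 1) / (m - 2) * X ^ ((m - 2) / (8 * (m + 1))) := by
        have h := log_le_rpow_div hXpos hδ'pos
        have e : X ^ ((m - 2) / (8 * (m + 1))) / ((m - 2) / (8 * (m + 1))) =
            8 * (m + 1) / (m - 2) * X ^ ((m - 2) / (8 * (m + 1))) := by
          rw [div_div_eq_mul_div]; ring
        rw [e] at h
        exact h
      calc Real.log X * (1 + r) ^ (-β)
          ≤ (8 * (m + 1) / (m - 2) * X ^ ((m - 2) / (8 * (m + 1)))) *
            X ^ (3 / (m + 1) * (-β)) := by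
            apply mul_le_mul h3 (h1.trans_eq h2) (Real.rpow_nonneg (by linarith) _)
            positivity
        _ = 8 * (m + 1) / (m - 2) *
            (X ^ ((m - 2) / (8 * (m + 1))) * X ^ (3 / (m + 1) * (-β))) := by ring
        _ = 8 * (m + 1) / (m - 2) * X ^ p := by
            have eexp : (m - 2) / (8 * (m + 1)) + 3 / (m + 1) * (-β) = p := by
              rw [hpdef, hβdef]; field_simp; ring
            rw [← Real.rpow_add hXpos, eexp]
    have hco0 : (0:ℝ) ≤ 3 * A * (1 + 4 / (m - 2)) * (1 + 11 / (m - 2)) ^ 2 * N :=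
      mul_nonneg (mul_nonneg (mul_nonneg (by linarith) (by linarith)) (sq_nonneg _)) hN
    rw [hconv]
    calc |∑' y : ℤ × ℤ, (Φ₀ (y - x) - Φ₀ (-x)) * f y|
        ≤ K₁ * (1 + 4 / (m - 2)) ^ 2 + K₂ * (1 + 4 / (s' - 2)) ^ 2 := hbd
      _ ≤ K₁ * (1 + 4 / (m - 2)) ^ 2 + K₂ * (1 + 11 / (m - 2)) ^ 2 := by
          apply add_le_add le_rfl
          exact mul_le_mul_of_nonneg_left (pow_le_pow_left₀ hs'0 (by linarith) 2) hK₂0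
      _ = (1 + 6 * C) * (1 + 4 / (m - 2)) ^ 2 * N * X ^ p +
          (3 * A * (1 + 4 / (m - 2)) * (1 + 11 / (m - 2)) ^ 2 * N) *
            (Real.log X * (1 + r) ^ (-β)) := by
          rw [hK₁def, hK₂def, ← hrX]; ring
      _ ≤ (1 + 6 * C) * (1 + 4 / (m - 2)) ^ 2 * N * X ^ p +
          (3 * A * (1 + 4 / (m - 2)) * (1 + 11 / (m - 2)) ^ 2 * N) *
            (8 * (m + 1) / (m - 2) * X ^ p) :=
          add_le_add le_rfl (mul_le_mul_of_nonneg_left hlogr hco0)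
      _ = ((1 + 6 * C) * (1 + 4 / (m - 2)) ^ 2 +
           3 * A * (1 + 4 / (m - 2)) * (1 + 11 / (m - 2)) ^ 2 * (8 * (m + 1) / (m - 2))) *
          N * X ^ p := by ring
      _ ≤ D * m ^ 4 / (m - 2) ^ 4 * N * X ^ p := by
          apply mul_le_mul_of_nonneg_right (mul_le_mul_of_nonneg_right _ hN) hXppos.le
          apply coefB hm hA1 hC
          have h1 : (0:ℝ) ≤ 50 * A * (4 * R + 8) ^ 2 := mul_nonneg (by linarith) (sq_nonneg _)
          rw [hDdef]; linarith
      _ ≤ c₀ ^ m / (m - 2) ^ 4 * N * X ^ p := by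
          apply mul_le_mul_of_nonneg_right (mul_le_mul_of_nonneg_right _ hN) hXppos.le
          exact (div_le_div_iff_of_pos_right (by positivity)).mpr habsorb

  · -- CASE A : no decay needed, crude bound
    set δ₀ : ℝ := (m - 2) / 2 with hδ₀def
    set s₀ : ℝ := (m + 2) / 2 with hs₀def
    have hδ₀pos : 0 < δ₀ := by rw [hδ₀def]; linarith
    have hs₀ : 2 < s₀ := by rw [hs₀def]; linarith
    set K₀ : ℝ := 2 * A * (1 + 2 / (m - 2)) * Real.log X * N with hK₀def
    have h2ε : 0 < 2 / (m - 2) := by positivity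
    have hK₀0 : 0 ≤ K₀ := by
      rw [hK₀def]
      apply mul_nonneg (mul_nonneg (mul_nonneg (by linarith) (by linarith)) (by linarith)) hN
    have hδ₀inv : 1 / δ₀ = 2 / (m - 2) := by
      rw [hδ₀def]; rw [div_div_eq_mul_div]; ring_nf
    clear_value δ₀ s₀ K₀
    have hpoint : ∀ y : ℤ × ℤ, |Φ₀ (y - x) * f y| ≤
        K₀ * (1 + latticeNorm y) ^ (-s₀) + 0 * (1 + latticeNorm y) ^ (-s₀) := by
      intro y
      have hyn := latticeNorm_nonneg y
      have hy1 : (0:ℝ) < 1 + latticeNorm y := one_add_latticeNorm_pos y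
      have htri : latticeNorm (y - x) ≤ latticeNorm y + latticeNorm x := latticeNorm_sub_le y x
      have heyx : (0:ℝ) < Real.exp 1 + latticeNorm (y - x) := by
        have := latticeNorm_nonneg (y - x); linarith [Real.exp_pos 1]
      have hey : (0:ℝ) < Real.exp 1 + latticeNorm y := by
        linarith [Real.exp_pos 1]
      have hsubmul : Real.exp 1 + latticeNorm (y - x) ≤ X * (Real.exp 1 + latticeNorm y) := by
        rw [hXdef]
        exact submul one_le_exp_one (latticeNorm_nonneg x) hyn
          (latticeNorm_nonneg (y - x)) (by linarith [latticeNorm_sub_le y x])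
      have hlog2 : Real.log (Real.exp 1 + latticeNorm (y - x)) ≤
          Real.log X + Real.log (Real.exp 1 + latticeNorm y) := by
        have h := Real.log_le_log heyx hsubmul
        rwa [Real.log_mul (ne_of_gt hXpos) (ne_of_gt hey)] at h
      have hΦb : |Φ₀ (y - x)| ≤ A * (Real.log X + Real.log (Real.exp 1 + latticeNorm y)) :=
        (hAlog (y - x)).trans (mul_le_mul_of_nonneg_left hlog2 (by linarith))
      have hlogy : Real.log (Real.exp 1 + latticeNorm y) ≤
          (1 + 2 / (m - 2)) * (1 + latticeNorm y) ^ δ₀ := by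
        have h := log_e_add_le hδ₀pos hyn
        rwa [hδ₀inv] at h
      have hpow1 : 1 ≤ (1 + latticeNorm y) ^ δ₀ := Real.one_le_rpow (by linarith) hδ₀pos.le
      have hQ1 : (1:ℝ) ≤ 1 + 2 / (m - 2) := by linarith
      have hgb : |Φ₀ (y - x)| ≤
          2 * A * (1 + 2 / (m - 2)) * Real.log X * (1 + latticeNorm y) ^ δ₀ := by
        have hQP1 : (1:ℝ) ≤ (1 + 2 / (m - 2)) * (1 + latticeNorm y) ^ δ₀ := by
          calc (1:ℝ) = 1 * 1 := (mul_one 1).symm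
            _ ≤ (1 + 2 / (m - 2)) * (1 + latticeNorm y) ^ δ₀ :=
              mul_le_mul hQ1 hpow1 (by norm_num) (by linarith)
        have e1 : Real.log X ≤ Real.log X * ((1 + 2 / (m - 2)) * (1 + latticeNorm y) ^ δ₀) :=
          le_mul_of_one_le_right (by linarith) hQP1
        have e2 : (1 + 2 / (m - 2)) * (1 + latticeNorm y) ^ δ₀ ≤
            Real.log X * ((1 + 2 / (m - 2)) * (1 + latticeNorm y) ^ δ₀) :=
          le_mul_of_one_le_left (mul_nonneg (by linarith) (by linarith)) hL1
        have h2 : Real.log X + (1 + 2 / (m - 2)) * (1 + latticeNorm y) ^ δ₀ ≤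
            2 * (Real.log X * ((1 + 2 / (m - 2)) * (1 + latticeNorm y) ^ δ₀)) := by linarith
        calc |Φ₀ (y - x)| ≤ A * (Real.log X + Real.log (Real.exp 1 + latticeNorm y)) := hΦb
          _ ≤ A * (Real.log X + (1 + 2 / (m - 2)) * (1 + latticeNorm y) ^ δ₀) := by
              apply mul_le_mul_of_nonneg_left _ (by linarith : (0:ℝ) ≤ A); linarith
          _ ≤ A * (2 * (Real.log X * ((1 + 2 / (m - 2)) * (1 + latticeNorm y) ^ δ₀))) :=
              mul_le_mul_of_nonneg_left h2 (by linarith)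
          _ = 2 * A * (1 + 2 / (m - 2)) * Real.log X * (1 + latticeNorm y) ^ δ₀ := by ring
      have hrpowsplit : (1 + latticeNorm y) ^ δ₀ * (1 + latticeNorm y) ^ (-m) =
          (1 + latticeNorm y) ^ (-s₀) := by
        rw [← Real.rpow_add hy1]
        congr 1
        rw [hδ₀def, hs₀def]; ring
      calc |Φ₀ (y - x) * f y| = |Φ₀ (y - x)| * |f y| := abs_mul _ _
        _ ≤ (2 * A * (1 + 2 / (m - 2)) * Real.log X * (1 + latticeNorm y) ^ δ₀) *
            (N * (1 + latticeNorm y) ^ (-m)) := by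
            apply mul_le_mul hgb (hfabs y) (abs_nonneg _)
            have : (0:ℝ) ≤ (1 + latticeNorm y) ^ δ₀ := by linarith
            have hA0 : (0:ℝ) ≤ A := by linarith
            positivity
        _ = K₀ * ((1 + latticeNorm y) ^ δ₀ * (1 + latticeNorm y) ^ (-m)) := by
            rw [hK₀def]; ring
        _ = K₀ * (1 + latticeNorm y) ^ (-s₀) := by rw [hrpowsplit]
        _ ≤ K₀ * (1 + latticeNorm y) ^ (-s₀) + 0 * (1 + latticeNorm y) ^ (-s₀) := by
            simp
    obtain ⟨hS, hb⟩ := tsum_bound_two hs₀ hs₀ hK₀0 le_rfl hpoint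
    have h4s : 4 / (s₀ - 2) = 8 / (m - 2) := by
      rw [hs₀def, div_eq_div_iff (by linarith) (by linarith)]; ring
    rw [h4s, zero_mul, add_zero] at hb
    -- coefficient estimates
    have hQm : 1 + 2 / (m - 2) = m / (m - 2) := by
      field_simp; ring
    have hQ8e : 1 + 8 / (m - 2) = (m + 6) / (m - 2) := by
      field_simp; ring
    have hQ8 : 1 + 8 / (m - 2) ≤ 5 * m / (m - 2) := by
      rw [hQ8e]
      exact (div_le_div_iff_of_pos_right hε).mpr (by linarith)
    have hQ80 : (0:ℝ) ≤ 1 + 8 / (m - 2) := by positivity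
    have hXθ0 : (0:ℝ) ≤ X ^ θ := (Real.rpow_pos_of_pos hXpos θ).le
    have hXpXθ : X ^ θ * X ^ p = 1 := by
      rw [← Real.rpow_add hXpos, hpθ]; simp
    have hA0 : (0:ℝ) ≤ A := by linarith
    have hεpow : (0:ℝ) < (m - 2) ^ 4 := by positivity
    have hm0 : (0:ℝ) < m := by linarith
    have hcoeff : 2 * A * (1 + 2 / (m - 2)) * (1 + 8 / (m - 2)) ^ 2 * (Real.log X * X ^ θ) ≤
        D * m ^ 4 / (m - 2) ^ 4 := by
      by_cases hP : 4 * R + 8 ≤ X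
      · -- subcase A2 : X ^ θ < 8
        have hXθ8 : X ^ θ ≤ 8 := by
          rcases not_and_or.mp hcase with h | h
          · exact absurd hP h
          · linarith [lt_of_not_ge h]
        have hlog8 : Real.log 8 ≤ 3 := log_eight_le_three
        have hθlog : θ * Real.log X ≤ 3 := by
          have e1 : Real.log (X ^ θ) = θ * Real.log X := Real.log_rpow hXpos θ
          have e2 : Real.log (X ^ θ) ≤ Real.log 8 :=
            Real.log_le_log (Real.rpow_pos_of_pos hXpos θ) hXθ8
          linarith
        have hlogXb : Real.log X ≤ 3 * (m + 1) / (m - 2) := by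
          have h3θ : 3 / θ = 3 * (m + 1) / (m - 2) := by
            rw [hθdef]; field_simp
          rw [← h3θ, le_div_iff₀ hθpos]
          linarith
        have hprod : Real.log X * X ^ θ ≤ 24 * (m + 1) / (m - 2) := by
          calc Real.log X * X ^ θ ≤ (3 * (m + 1) / (m - 2)) * 8 :=
                mul_le_mul hlogXb hXθ8 hXθ0 (by positivity)
            _ = 24 * (m + 1) / (m - 2) := by ring
        have hfac0 : (0:ℝ) ≤ 2 * A * (m / (m - 2)) :=
          mul_nonneg (by linarith) (div_nonneg hm0.le hε.le)
        have hchain : 2 * A * (1 + 2 / (m - 2)) * (1 + 8 / (m - 2)) ^ 2 * (Real.log X * X ^ θ) ≤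
            2 * A * (m / (m - 2)) * (5 * m / (m - 2)) ^ 2 * (24 * (m + 1) / (m - 2)) := by
          rw [hQm]
          have hLθ0 : 0 ≤ Real.log X * X ^ θ := mul_nonneg (by linarith) hXθ0
          have h1 : 2 * A * (m / (m - 2)) * (1 + 8 / (m - 2)) ^ 2 ≤
              2 * A * (m / (m - 2)) * (5 * m / (m - 2)) ^ 2 :=
            mul_le_mul_of_nonneg_left (pow_le_pow_left₀ hQ80 hQ8 2) hfac0
          exact mul_le_mul h1 hprod hLθ0
            (mul_nonneg hfac0 (sq_nonneg _))
        have heq : 2 * A * (m / (m - 2)) * (5 * m / (m - 2)) ^ 2 * (24 * (m + 1) / (m - 2)) =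
            1200 * A * m ^ 3 * (m + 1) / (m - 2) ^ 4 := by
          field_simp; ring
        have hD2400 : 2400 * A ≤ D := by
          have h1 : (0:ℝ) ≤ 50 * A * (4 * R + 8) ^ 2 := mul_nonneg (by linarith) (sq_nonneg _)
          rw [hDdef]; linarith
        have hfinal : 1200 * A * m ^ 3 * (m + 1) ≤ D * m ^ 4 := coefA2 hm hA1 hD2400
        calc 2 * A * (1 + 2 / (m - 2)) * (1 + 8 / (m - 2)) ^ 2 * (Real.log X * X ^ θ)
            ≤ 2 * A * (m / (m - 2)) * (5 * m / (m - 2)) ^ 2 * (24 * (m + 1) / (m - 2)) := hchain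
          _ = 1200 * A * m ^ 3 * (m + 1) / (m - 2) ^ 4 := heq
          _ ≤ D * m ^ 4 / (m - 2) ^ 4 := (div_le_div_iff_of_pos_right hεpow).mpr hfinal
      · -- subcase A1 : X small
        have hX48 : X ≤ 4 * R + 8 := (lt_of_not_ge hP).le
        have hXθX : X ^ θ ≤ X := by
          calc X ^ θ ≤ X ^ (1:ℝ) := Real.rpow_le_rpow_of_exponent_le hX1 hθ1
            _ = X := Real.rpow_one X
        have hlogX : Real.log X ≤ X := by
          have := Real.log_le_sub_one_of_pos hXpos; linarith
        have hprod : Real.log X * X ^ θ ≤ (4 * R + 8) ^ 2 := by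
          calc Real.log X * X ^ θ ≤ (4 * R + 8) * (4 * R + 8) :=
                mul_le_mul (hlogX.trans hX48) (hXθX.trans hX48) hXθ0 (by linarith)
            _ = (4 * R + 8) ^ 2 := by ring
        have hfac0 : (0:ℝ) ≤ 2 * A * (m / (m - 2)) :=
          mul_nonneg (by linarith) (div_nonneg hm0.le hε.le)
        have hchain : 2 * A * (1 + 2 / (m - 2)) * (1 + 8 / (m - 2)) ^ 2 * (Real.log X * X ^ θ) ≤
            2 * A * (m / (m - 2)) * (5 * m / (m - 2)) ^ 2 * (4 * R + 8) ^ 2 := by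
          rw [hQm]
          have hLθ0 : 0 ≤ Real.log X * X ^ θ := mul_nonneg (by linarith) hXθ0
          have h1 : 2 * A * (m / (m - 2)) * (1 + 8 / (m - 2)) ^ 2 ≤
              2 * A * (m / (m - 2)) * (5 * m / (m - 2)) ^ 2 :=
            mul_le_mul_of_nonneg_left (pow_le_pow_left₀ hQ80 hQ8 2) hfac0
          exact mul_le_mul h1 hprod hLθ0
            (mul_nonneg hfac0 (sq_nonneg _))
        have heq : 2 * A * (m / (m - 2)) * (5 * m / (m - 2)) ^ 2 * (4 * R + 8) ^ 2 =
            (50 * A * m ^ 3 * (4 * R + 8) ^ 2) * (m - 2) / (m - 2) ^ 4 := by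
          field_simp; ring
        have hD50 : 50 * A * (4 * R + 8) ^ 2 ≤ D := by
          rw [hDdef]; linarith
        have hfinal : (50 * A * m ^ 3 * (4 * R + 8) ^ 2) * (m - 2) ≤ D * m ^ 4 :=
          coefA1 hm hA1 hD50
        calc 2 * A * (1 + 2 / (m - 2)) * (1 + 8 / (m - 2)) ^ 2 * (Real.log X * X ^ θ)
            ≤ 2 * A * (m / (m - 2)) * (5 * m / (m - 2)) ^ 2 * (4 * R + 8) ^ 2 := hchain
          _ = (50 * A * m ^ 3 * (4 * R + 8) ^ 2) * (m - 2) / (m - 2) ^ 4 := heq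
          _ ≤ D * m ^ 4 / (m - 2) ^ 4 := (div_le_div_iff_of_pos_right hεpow).mpr hfinal
    -- conclude case A
    calc |∑' y : ℤ × ℤ, Φ₀ (y - x) * f y| ≤ K₀ * (1 + 8 / (m - 2)) ^ 2 := hb
      _ = (2 * A * (1 + 2 / (m - 2)) * (1 + 8 / (m - 2)) ^ 2 * (Real.log X * X ^ θ)) * N * X ^ p
          := by
          have : (2 * A * (1 + 2 / (m - 2)) * (1 + 8 / (m - 2)) ^ 2 * (Real.log X * X ^ θ)) * N *
              X ^ p = (2 * A * (1 + 2 / (m - 2)) * Real.log X * N) * (1 + 8 / (m - 2)) ^ 2 *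
              (X ^ θ * X ^ p) := by ring
          rw [this, hXpXθ, mul_one, hK₀def]
      _ ≤ (D * m ^ 4 / (m - 2) ^ 4) * N * X ^ p :=
          mul_le_mul_of_nonneg_right (mul_le_mul_of_nonneg_right hcoeff hN) hXppos.le
      _ ≤ c₀ ^ m / (m - 2) ^ 4 * N * X ^ p := by
          apply mul_le_mul_of_nonneg_right (mul_le_mul_of_nonneg_right _ hN) hXppos.le
          exact (div_le_div_iff_of_pos_right hεpow).mpr habsorb
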